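/- arXiv:2207.12805 — 3 statements merged into one kernel-verified Lean document; each statement's English description precedes it below -/
import Mathlib

section
/- Let G be a bipartite graph with parts A and B, |A| = K and |B| = b, in which every vertex of B has degree at least K/2 and K/2 < b. Then there exists a matching in G of size at least K/8. -/
/-- In a bipartite graph with parts `A` (size `K`) and `B` (size `b`) where every vertex of `B`
has at least `K/2` neighbors and `K/2 < b`, there exists a matching of size at least `K/8`. -/
theorem stmt9 {A B : Type*} [Fintype A] [Fintype B] [DecidableEq A]
    (N : B → Finset A)
    (hdeg : ∀ v : B, (Fintype.card A : ℝ) / 2 ≤ ((N v).card : ℝ))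
    (hKb : (Fintype.card A : ℝ) / 2 < (Fintype.card B : ℝ)) :
    ∃ (s : Finset A) (m : A → B), (Fintype.card A : ℝ) / 8 ≤ (s.card : ℝ) ∧
      Set.InjOn m s ∧ ∀ a ∈ s, a ∈ N (m a) := by
  classical
  set K := Fintype.card A with hK
  set b := Fintype.card B with hb
  by_cases hK0 : K = 0
  · have hA : IsEmpty A := Fintype.card_eq_zero_iff.mp hK0
    refine ⟨∅, fun a => isEmptyElim a, ?_, ?_, ?_⟩
    · simp [hK0]
    · simp [Set.InjOn]
    · simp
  · have hKpos : 0 < K := Nat.pos_of_ne_zero hK0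
    have hKr : (0:ℝ) < K := by exact_mod_cast hKpos
    have hbr : (0:ℝ) < b := lt_of_le_of_lt (by positivity) hKb
    have hbpos : 0 < b := by exact_mod_cast hbr
    have hBne : Nonempty B := Fintype.card_pos_iff.mp hbpos
    set M : A → Finset B := fun a => Finset.univ.filter (fun v => a ∈ N v) with hM
    have hsum : ∑ a, (M a).card = ∑ v, (N v).card := by
      simp only [hM, Finset.card_filter]
      rw [Finset.sum_comm]
      congr 1
      ext v
      rw [← Finset.card_filter]
      congr 1
      simp
    have hlow : (b:ℝ) * ((K:ℝ)/2) ≤ ∑ a, ((M a).card : ℝ) := by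
      have h1 : ∑ v : B, (K:ℝ)/2 ≤ ∑ v, ((N v).card : ℝ) :=
        Finset.sum_le_sum (fun v _ => hdeg v)
      have h2 : ∑ a, ((M a).card : ℝ) = ∑ v, ((N v).card : ℝ) := by
        exact_mod_cast hsum
      rw [h2]
      simpa [Finset.sum_const, Finset.card_univ, nsmul_eq_mul] using h1
    set big := Finset.univ.filter (fun a => (b:ℝ)/4 ≤ ((M a).card : ℝ)) with hbig_def
    have hhigh : ∑ a, ((M a).card : ℝ) ≤ (big.card : ℝ) * b + (K:ℝ) * ((b:ℝ)/4) := by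
      rw [← Finset.sum_filter_add_sum_filter_not Finset.univ
        (fun a => (b:ℝ)/4 ≤ ((M a).card : ℝ))]
      apply add_le_add
      · calc ∑ a ∈ big, ((M a).card : ℝ) ≤ ∑ a ∈ big, (b:ℝ) := by
              apply Finset.sum_le_sum
              intro a _
              have : (M a).card ≤ b := by
                rw [hb]
                exact (Finset.card_le_card (Finset.filter_subset _ _)).trans
                  (le_of_eq Finset.card_univ)
              exact_mod_cast this
          _ = (big.card : ℝ) * b := by simp [mul_comm]
      · calc ∑ a ∈ Finset.univ.filter (fun a => ¬ ((b:ℝ)/4 ≤ ((M a).card : ℝ))),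
              ((M a).card : ℝ)
            ≤ ∑ a ∈ Finset.univ.filter (fun a => ¬ ((b:ℝ)/4 ≤ ((M a).card : ℝ))), (b:ℝ)/4 := by
              apply Finset.sum_le_sum
              intro a ha
              exact le_of_lt (not_le.mp (Finset.mem_filter.mp ha).2)
          _ ≤ (K:ℝ) * ((b:ℝ)/4) := by
              rw [Finset.sum_const, nsmul_eq_mul]
              have : (Finset.univ.filter
                  (fun a => ¬ ((b:ℝ)/4 ≤ ((M a).card : ℝ)))).card ≤ K := by
                rw [hK]
                exact (Finset.card_le_card (Finset.filter_subset _ _)).trans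
                  (le_of_eq Finset.card_univ)
              have hb4 : (0:ℝ) ≤ (b:ℝ)/4 := by positivity
              exact mul_le_mul_of_nonneg_right (by exact_mod_cast this) hb4
    have hbig : (K:ℝ)/4 ≤ (big.card : ℝ) := by
      have h := hlow.trans hhigh
      nlinarith
    set c := ⌈(K:ℝ)/8⌉₊ with hc
    have hcbig : c ≤ big.card := by
      rw [hc, Nat.ceil_le]
      linarith
    obtain ⟨s, hssub, hscard⟩ := Finset.exists_subset_card_eq hcbig
    have hMc : ∀ a ∈ s, c ≤ (M a).card := by
      intro a ha
      have h4 := (Finset.mem_filter.mp (hssub ha)).2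
      rw [hc, Nat.ceil_le]
      linarith
    have hall : ∀ (s' : Finset {x // x ∈ s}),
        s'.card ≤ (s'.biUnion (fun a => M a.1)).card := by
      intro s'
      rcases s'.eq_empty_or_nonempty with h | ⟨a₀, ha₀⟩
      · simp [h]
      · have h1 : s'.card ≤ c := by
          have h := Finset.card_le_card (Finset.subset_univ s')
          simpa [Finset.card_univ, hscard] using h
        have h2 : M a₀.1 ⊆ s'.biUnion (fun a => M a.1) :=
          Finset.subset_biUnion_of_mem (fun a : {x // x ∈ s} => M a.1) ha₀
        exact h1.trans ((hMc a₀.1 a₀.2).trans (Finset.card_le_card h2))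
    obtain ⟨f, hfinj, hf⟩ :=
      (Finset.all_card_le_biUnion_card_iff_existsInjective' (fun a : {x // x ∈ s} => M a.1)).mp
        hall
    refine ⟨s, fun a => if h : a ∈ s then f ⟨a, h⟩ else Classical.arbitrary B, ?_, ?_, ?_⟩
    · rw [hscard]
      exact Nat.le_ceil _
    · intro a₁ h₁ a₂ h₂ heq
      have h₁' : a₁ ∈ s := h₁
      have h₂' : a₂ ∈ s := h₂
      simp only [dif_pos h₁', dif_pos h₂'] at heq
      have := hfinj heq
      exact congrArg Subtype.val this
    · intro a ha
      simp only [dif_pos ha]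
      have := hf ⟨a, ha⟩
      simpa [hM] using (Finset.mem_filter.mp this).2
end

section
/- Suppose y★ : A → ℝ satisfies ‖y★ − ỹ★‖_∞ ≤ ω where ỹ★ ∈ F, and at round t the function f̃_t maximizes max_{B ⊆ U_t, |B| = b} Σ_{a∈B} f(a) over all f ∈ F with Σ_{(a,y)∈D_t} (f(a) − y)² ≤ γ_t, where γ_t ≥ (t−1)·b·ω². Then Σ_{a ∈ B★} y★(a) ≤ b·ω + Σ_{a ∈ B_t} f̃_t(a), where B★ is the subset of U_t of size b maximizing Σ_{a∈B} y★(a) and B_t is the batch of size b maximizing Σ_{a∈B} f̃_t(a). -/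
/-- Optimism under misspecification: if `‖y★ − ỹ★‖∞ ≤ ω` with `ỹ★ ∈ F`, and `f̃` maximizes the
optimistic batch objective over the constraint set `{f ∈ F : Σ_{(a,y)∈D} (f a − y)² ≤ γ}` with
`γ ≥ (t−1)·b·ω²`, then `Σ_{a∈B★} y★ a ≤ b·ω + Σ_{a∈B_t} f̃ a`. -/
theorem stmt12 {A : Type*} [DecidableEq A]
    (F : Set (A → ℝ)) (ystar ytil : A → ℝ) (hytil : ytil ∈ F)
    (ω : ℝ) (hω : 0 ≤ ω) (hmis : ∀ a, |ystar a - ytil a| ≤ ω)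
    (t b : ℕ) (ht : 1 ≤ t) (U : Finset A) (hU : b ≤ U.card)
    (D : Multiset A) (hD : Multiset.card D = (t - 1) * b)
    (γ : ℝ) (hγ : ((t : ℝ) - 1) * b * ω ^ 2 ≤ γ)
    (ftil : A → ℝ) (hftil : ftil ∈ F)
    (hfeas : (D.map (fun a => (ftil a - ystar a) ^ 2)).sum ≤ γ)
    (Bt : Finset A) (hBt : Bt ⊆ U) (hBtcard : Bt.card = b)
    (hBtmax : ∀ Bset ⊆ U, Bset.card = b → ∑ a ∈ Bset, ftil a ≤ ∑ a ∈ Bt, ftil a)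
    (hopt : ∀ f ∈ F, (D.map (fun a => (f a - ystar a) ^ 2)).sum ≤ γ →
      ∀ Bset ⊆ U, Bset.card = b → ∑ a ∈ Bset, f a ≤ ∑ a ∈ Bt, ftil a)
    (Bstar : Finset A) (hBs : Bstar ⊆ U) (hBscard : Bstar.card = b)
    (hBsmax : ∀ Bset ⊆ U, Bset.card = b → ∑ a ∈ Bset, ystar a ≤ ∑ a ∈ Bstar, ystar a) :
    ∑ a ∈ Bstar, ystar a ≤ (b : ℝ) * ω + ∑ a ∈ Bt, ftil a := by
  -- ytil is feasible
  have hfeas' : (D.map (fun a => (ytil a - ystar a) ^ 2)).sum ≤ γ := by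
    have hbound : (D.map (fun a => (ytil a - ystar a) ^ 2)).sum ≤
        (Multiset.card D : ℝ) * ω ^ 2 := by
      have := Multiset.sum_map_le_sum_map (s := D) (fun a => (ytil a - ystar a) ^ 2)
        (fun _ : A => ω ^ 2) (fun a _ => by
          have h := hmis a
          have : |ytil a - ystar a| ≤ ω := by rwa [abs_sub_comm] at h
          calc (ytil a - ystar a) ^ 2 = |ytil a - ystar a| ^ 2 := (sq_abs _).symm
            _ ≤ ω ^ 2 := by
              exact pow_le_pow_left₀ (abs_nonneg _) this 2)
      simpa [Multiset.map_const', Multiset.sum_replicate, nsmul_eq_mul] using this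
    refine hbound.trans ?_
    rw [hD]
    have hc : ((t - 1 : ℕ) : ℝ) = (t : ℝ) - 1 := by
      have : (1 : ℕ) ≤ t := ht
      push_cast [this]; ring
    calc ((((t - 1) * b : ℕ)) : ℝ) * ω ^ 2 = ((t : ℝ) - 1) * b * ω ^ 2 := by
          push_cast [hc]; ring
      _ ≤ γ := hγ
  have h1 : ∑ a ∈ Bstar, ytil a ≤ ∑ a ∈ Bt, ftil a :=
    hopt ytil hytil hfeas' Bstar hBs hBscard
  have h2 : ∑ a ∈ Bstar, ystar a ≤ ∑ a ∈ Bstar, ytil a + (b : ℝ) * ω := by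
    have : ∑ a ∈ Bstar, ystar a - ∑ a ∈ Bstar, ytil a ≤ (b : ℝ) * ω := by
      rw [← Finset.sum_sub_distrib]
      calc ∑ a ∈ Bstar, (ystar a - ytil a) ≤ ∑ _a ∈ Bstar, ω :=
            Finset.sum_le_sum (fun a _ => (abs_le.mp (hmis a)).2)
        _ = (b : ℝ) * ω := by rw [Finset.sum_const, hBscard, nsmul_eq_mul]
    linarith
  linarith
end

section
/- Let K be a symmetric positive definite n×n matrix. The set function B ↦ log det(K[B,B]) (with value 0 on the empty set) is submodular on subsets of {1,…,n}: for all B ⊆ C ⊆ {1,…,n} and i ∉ C, log det(K[B∪{i},B∪{i}]) − log det(K[B,B]) ≥ log det(K[C∪{i},C∪{i}]) − log det(K[C,C]). -/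
open Matrix Finset

namespace Stmt19

variable {n : ℕ}

/-- Extend a vector on a finset by zero. -/
def extv (B : Finset (Fin n)) (x : B → ℝ) : Fin n → ℝ :=
  fun k => if h : k ∈ B then x ⟨k, h⟩ else 0

lemma dot_extv (B : Finset (Fin n)) (x : B → ℝ) (f : Fin n → ℝ) :
    extv B x ⬝ᵥ f = ∑ b : B, x b * f b := by
  rw [dotProduct,
    ← Finset.sum_subset (Finset.subset_univ B) (fun j _ hj => by simp [extv, hj]),
    ← Finset.sum_coe_sort B (fun j => extv B x j * f j)]
  exact Finset.sum_congr rfl fun b _ => by simp [extv, b.2]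

lemma mulVec_extv (K : Matrix (Fin n) (Fin n) ℝ) (B : Finset (Fin n)) (x : B → ℝ)
    (j : Fin n) : K.mulVec (extv B x) j = ∑ b : B, x b * K j b := by
  rw [mulVec, dotProduct_comm, dot_extv]

lemma quad_extv (K : Matrix (Fin n) (Fin n) ℝ) (B : Finset (Fin n)) (x : B → ℝ) :
    x ⬝ᵥ (Matrix.of fun a b : B => K a b).mulVec x
      = extv B x ⬝ᵥ K.mulVec (extv B x) := by
  rw [dot_extv]
  simp only [dotProduct]
  refine Finset.sum_congr rfl fun a _ => ?_
  congr 1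
  rw [mulVec_extv]
  simp only [mulVec, dotProduct, Matrix.of_apply]
  exact Finset.sum_congr rfl fun b _ => by ring


lemma posdef_sub (K : Matrix (Fin n) (Fin n) ℝ) (hK : K.PosDef) (B : Finset (Fin n)) :
    (Matrix.of fun a b : B => K a b).PosDef := by
  refine Matrix.PosDef.of_dotProduct_mulVec_pos (hK.isHermitian.submatrix (fun a : B => (a : Fin n))) ?_
  intro x hx
  have hne : extv B x ≠ 0 := by
    intro h
    apply hx
    funext a
    have := congrFun h a
    simpa [extv, a.2] using this
  have h2 := hK.dotProduct_mulVec_pos hne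
  simpa [quad_extv K B x] using h2


/-- The reindexing equivalence for `insert i B`. -/
def eqv (B : Finset (Fin n)) (i : Fin n) (hi : i ∉ B) :
    ((insert i B : Finset (Fin n)) : Finset (Fin n)) ≃ (B ⊕ Unit) where
  toFun x := if h : (x : Fin n) ∈ B then Sum.inl ⟨x, h⟩ else Sum.inr ()
  invFun y := match y with
    | Sum.inl b => ⟨(b : Fin n), Finset.mem_insert_of_mem b.2⟩
    | Sum.inr _ => ⟨i, Finset.mem_insert_self i B⟩
  left_inv x := by
    by_cases h : (x : Fin n) ∈ B
    · simp [h]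
    · have hxi : (x : Fin n) = i := by
        rcases Finset.mem_insert.mp x.2 with h' | h'
        · exact h'
        · exact absurd h' h
      simp only [h, dif_neg, not_false_iff]
      exact Subtype.ext hxi.symm
  right_inv y := by
    rcases y with b | u
    · simp [b.2]
    · simp [hi]

lemma key (K : Matrix (Fin n) (Fin n) ℝ) (hK : K.PosDef)
    (B : Finset (Fin n)) (i : Fin n) (hi : i ∉ B) :
    ∃ u : Fin n → ℝ, u i = 1 ∧ (∀ j, j ∉ (insert i B : Finset (Fin n)) → u j = 0) ∧
      (∀ j ∈ B, K.mulVec u j = 0) ∧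
      (Matrix.of fun a b : (insert i B : Finset (Fin n)) => K a b).det
        = (Matrix.of fun a b : B => K a b).det * (u ⬝ᵥ K.mulVec u) := by
  classical
  set A : Matrix B B ℝ := Matrix.of fun a b : B => K a b with hA
  have hApd : A.PosDef := posdef_sub K hK B
  have hAdet : IsUnit A.det := hApd.det_pos.ne'.isUnit
  haveI : Invertible A := A.invertibleOfIsUnitDet hAdet
  set col : B → ℝ := fun b => K b i with hcol
  set w : B → ℝ := A⁻¹ *ᵥ col with hw
  have hAw : A *ᵥ w = col := by
    rw [hw, Matrix.mulVec_mulVec, Matrix.mul_nonsing_inv A hAdet, Matrix.one_mulVec]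
  set v : B → ℝ := fun b => -(w b) with hv
  set u : Fin n → ℝ := Pi.single i 1 + extv B v with hu
  have hui : u i = 1 := by simp [hu, extv, hi]
  have husupp : ∀ j, j ∉ (insert i B : Finset (Fin n)) → u j = 0 := by
    intro j hj
    have hji : j ≠ i := fun h => hj (h ▸ Finset.mem_insert_self i B)
    have hjB : j ∉ B := fun h => hj (Finset.mem_insert_of_mem h)
    simp [hu, extv, hji, hjB, Pi.single_eq_of_ne hji]
  -- the value of K *ᵥ u at any coordinate
  have hKu : ∀ j : Fin n, K.mulVec u j = K j i + ∑ b : B, v b * K j b := by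
    intro j
    rw [hu, Matrix.mulVec_add, Pi.add_apply, mulVec_extv]
    congr 1
    rw [Matrix.mulVec_single]
    simp
  have hker : ∀ j ∈ B, K.mulVec u j = 0 := by
    intro j hj
    rw [hKu j]
    have h2 : (A *ᵥ w) ⟨j, hj⟩ = ∑ b : B, K j ↑b * w b := by
      simp [Matrix.mulVec, dotProduct, hA]
    have h1 : ∑ b : B, v b * K j ↑b = -((A *ᵥ w) ⟨j, hj⟩) := by
      rw [h2, ← Finset.sum_neg_distrib]
      exact Finset.sum_congr rfl fun b _ => by simp [hv]; ring
    rw [h1, hAw, hcol]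
    simp
  -- quadratic form value
  have hq : u ⬝ᵥ K.mulVec u = (K.mulVec u) i := by
    nth_rewrite 1 [hu]
    rw [add_dotProduct, single_dotProduct, dot_extv]
    have hz : ∑ b : B, v b * K.mulVec u ↑b = 0 :=
      Finset.sum_eq_zero fun b _ => by rw [hker ↑b b.2, mul_zero]
    rw [hz, add_zero, one_mul]
  have hqval : u ⬝ᵥ K.mulVec u = K i i + ∑ b : B, v b * K i ↑b := by
    rw [hq, hKu i]
  -- block decomposition
  set M : Matrix (insert i B : Finset (Fin n)) (insert i B : Finset (Fin n)) ℝ :=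
    Matrix.of fun a b : (insert i B : Finset (Fin n)) => K a b with hM
  set Bm : Matrix B Unit ℝ := Matrix.of fun b _ => K ↑b i with hBm
  set Cm : Matrix Unit B ℝ := Matrix.of fun _ b => K i ↑b with hCm
  set Dm : Matrix Unit Unit ℝ := Matrix.of fun _ _ => K i i with hDm
  have hsub : (M.submatrix (eqv B i hi).symm (eqv B i hi).symm)
      = Matrix.fromBlocks A Bm Cm Dm := by
    ext j k
    rcases j with a | j <;> rcases k with b | k <;> rfl
  have hdet : M.det = A.det * (Dm - Cm * ⅟A * Bm).det := by
    rw [← Matrix.det_submatrix_equiv_self (eqv B i hi).symm M, hsub,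
      Matrix.det_fromBlocks₁₁]
  have hCAB : (Cm * ⅟A * Bm) () () = ∑ b : B, w b * K i ↑b := by
    rw [invOf_eq_nonsing_inv]
    simp only [Matrix.mul_apply, hw, Matrix.mulVec, dotProduct, Matrix.of_apply, hcol,
      hCm, hBm, Finset.sum_mul, Finset.mul_sum]
    rw [Finset.sum_comm]
    exact Finset.sum_congr rfl fun a _ => Finset.sum_congr rfl fun b _ => by ring
  have hvw : ∑ b : B, v b * K i ↑b = -∑ b : B, w b * K i ↑b := by
    rw [← Finset.sum_neg_distrib]
    exact Finset.sum_congr rfl fun b _ => by simp [hv]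
  refine ⟨u, hui, husupp, hker, ?_⟩
  rw [hdet, hqval, hvw]
  congr 1
  rw [Matrix.det_unique]
  have : (Dm - Cm * ⅟A * Bm) default default = K i i - (Cm * ⅟A * Bm) () () := by
    simp [hDm, Matrix.sub_apply]
  rw [this, hCAB]
  ring
end Stmt19

/-- Submodularity of `B ↦ log det K[B,B]` for a symmetric positive definite matrix `K`:
for `B ⊆ C` and `i ∉ C`, the marginal gain of adding `i` to `C` is at most that of adding
`i` to `B`. -/
theorem stmt19 (n : ℕ) (K : Matrix (Fin n) (Fin n) ℝ) (hK : K.PosDef)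
    (B C : Finset (Fin n)) (hBC : B ⊆ C) (i : Fin n) (hi : i ∉ C) :
    Real.log (Matrix.of fun a b : (insert i C : Finset (Fin n)) => K a b).det
        - Real.log (Matrix.of fun a b : C => K a b).det
      ≤ Real.log (Matrix.of fun a b : (insert i B : Finset (Fin n)) => K a b).det
        - Real.log (Matrix.of fun a b : B => K a b).det := by
  classical
  have hiB : i ∉ B := fun h => hi (hBC h)
  obtain ⟨uB, huBi, huBsupp, huBker, hdetB⟩ := Stmt19.key K hK B i hiB
  obtain ⟨uC, huCi, huCsupp, huCker, hdetC⟩ := Stmt19.key K hK C i hi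
  set qB := uB ⬝ᵥ K.mulVec uB with hqB
  set qC := uC ⬝ᵥ K.mulVec uC with hqC
  have hqC_pos : 0 < qC := by
    have hne : uC ≠ 0 := fun h => by simp [h] at huCi
    have h2 := hK.dotProduct_mulVec_pos hne
    simpa using h2
  set d : Fin n → ℝ := uB - uC with hd
  have hdK : d ⬝ᵥ K.mulVec uC = 0 := by
    rw [dotProduct]
    refine Finset.sum_eq_zero fun j _ => ?_
    by_cases hjC : j ∈ C
    · rw [huCker j hjC, mul_zero]
    · have hdj : d j = 0 := by
        by_cases hji : j = i
        · subst hji; simp [hd, huBi, huCi]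
        · have h1 : uB j = 0 := huBsupp j (by
            simp only [Finset.mem_insert, not_or]
            exact ⟨hji, fun h => hjC (hBC h)⟩)
          have h2 : uC j = 0 := huCsupp j (by
            simp only [Finset.mem_insert, not_or]
            exact ⟨hji, hjC⟩)
          simp [hd, h1, h2]
      rw [hdj, zero_mul]
  have hKt : Kᵀ = K := by
    ext a b
    have := congrFun (congrFun hK.isHermitian a) b
    simpa using this
  have hsymm : uC ⬝ᵥ K.mulVec d = d ⬝ᵥ K.mulVec uC := by
    rw [Matrix.dotProduct_mulVec, ← Matrix.mulVec_transpose, hKt, dotProduct_comm]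
  have hdKd : 0 ≤ d ⬝ᵥ K.mulVec d := by
    have h2 := hK.posSemidef.dotProduct_mulVec_nonneg d
    simpa using h2
  have hqCB : qC ≤ qB := by
    have huB : uB = uC + d := by simp [hd]
    have hq : qB = qC + d ⬝ᵥ K.mulVec d := by
      rw [hqB, huB]
      simp only [Matrix.mulVec_add, add_dotProduct, dotProduct_add]
      rw [hsymm, hdK]
      ring
    rw [hq]
    linarith
  have hqB_pos : 0 < qB := lt_of_lt_of_le hqC_pos hqCB
  have hdB : 0 < (Matrix.of fun a b : B => K a b).det := (Stmt19.posdef_sub K hK B).det_pos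
  have hdC : 0 < (Matrix.of fun a b : C => K a b).det := (Stmt19.posdef_sub K hK C).det_pos
  rw [hdetB, hdetC, Real.log_mul hdC.ne' hqC_pos.ne', Real.log_mul hdB.ne' hqB_pos.ne']
  have hlog : Real.log qC ≤ Real.log qB :=
    (Real.log_le_log_iff hqC_pos hqB_pos).mpr hqCB
  linarith
end
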